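/- Let (Γ, T, n⊥, n, κ_g, τ_g) be a closed asymptotic curve in ℝ³ and u a unit vector with u × T(t) ≠ 0 for all t. Then the set Z := {t ∈ [0, 2π) : ⟨u, n(t)⟩ = 0} is finite, and at each t₀ ∈ Z the derivative of the function t ↦ ⟨u, n(t)⟩, which equals −τ_g(t₀)·⟨u, n⊥(t₀)⟩, is nonzero (i.e. every zero of ⟨u, n⟩ is nondegenerate). -/

import Mathlib

open Real intervalIntegral

noncomputable section

/-- The cross product on `EuclideanSpace ℝ (Fin 3)`. -/
def cross3 (a b : EuclideanSpace ℝ (Fin 3)) : EuclideanSpace ℝ (Fin 3) :=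
  (EuclideanSpace.equiv (Fin 3) ℝ).symm
    (crossProduct ((EuclideanSpace.equiv (Fin 3) ℝ) a) ((EuclideanSpace.equiv (Fin 3) ℝ) b))

lemma key_scalar (n0 n1 n2 t0 t1 t2 u0 u1 u2 : ℝ)
    (hn : n0^2+n1^2+n2^2 = 1)
    (hnT : n0*t0+n1*t1+n2*t2 = 0)
    (hun : u0*n0+u1*n1+u2*n2 = 0)
    (huc : u0*(n1*t2-n2*t1)+u1*(n2*t0-n0*t2)+u2*(n0*t1-n1*t0) = 0) :
    u1*t2-u2*t1 = 0 ∧ u2*t0-u0*t2 = 0 ∧ u0*t1-u1*t0 = 0 := by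
  have hsq : (u1*t2-u2*t1)^2 + (u2*t0-u0*t2)^2 + (u0*t1-u1*t0)^2 = 0 := by
    linear_combination
      (-((u1*t2-u2*t1)^2 + (u2*t0-u0*t2)^2 + (u0*t1-u1*t0)^2)) * hn
      + ((n0*t0+n1*t1+n2*t2)*(u0^2+u1^2+u2^2) - (u0*n0+u1*n1+u2*n2)*(u0*t0+u1*t1+u2*t2)) * hnT
      + ((u0*n0+u1*n1+u2*n2)*(t0^2+t1^2+t2^2) - (n0*t0+n1*t1+n2*t2)*(u0*t0+u1*t1+u2*t2)) * hun
      + (-(n0*(u1*t2-u2*t1)+n1*(u2*t0-u0*t2)+n2*(u0*t1-u1*t0))) * huc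
  refine ⟨?_, ?_, ?_⟩ <;>
    nlinarith [sq_nonneg (u1*t2-u2*t1), sq_nonneg (u2*t0-u0*t2), sq_nonneg (u0*t1-u1*t0)]

/-- The zeros of `⟨u, n⟩` on `[0, 2π)` are finite and nondegenerate: at each zero the
derivative of `t ↦ ⟨u, n(t)⟩` equals `−τ_g·⟨u, n⊥⟩` and is nonzero. -/
theorem stmt6
    (Γ n : ℝ → EuclideanSpace ℝ (Fin 3)) (κg τg : ℝ → ℝ)
    (hΓ : ContDiff ℝ 2 Γ) (hΓper : Function.Periodic Γ (2 * π))
    (hT1 : ∀ t, ‖deriv Γ t‖ = 1)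
    (hn : ContDiff ℝ 1 n) (hnper : Function.Periodic n (2 * π))
    (hn1 : ∀ t, ‖n t‖ = 1)
    (hnT : ∀ t, (inner ℝ (n t) (deriv Γ t) : ℝ) = 0)
    (hκcont : Continuous κg) (hκper : Function.Periodic κg (2 * π))
    (hτcont : Continuous τg) (hτper : Function.Periodic τg (2 * π))
    (hτ : ∀ t, τg t ≠ 0)
    (hDarboux1 : ∀ t, deriv (deriv Γ) t = κg t • cross3 (n t) (deriv Γ t))
    (hDarboux2 : ∀ t, deriv (fun s => cross3 (n s) (deriv Γ s)) t
      = -κg t • deriv Γ t + τg t • n t)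
    (hDarboux3 : ∀ t, deriv n t = -τg t • cross3 (n t) (deriv Γ t))
    (u : EuclideanSpace ℝ (Fin 3)) (hu : ‖u‖ = 1)
    (huT : ∀ t, cross3 u (deriv Γ t) ≠ 0) :
    ({t ∈ Set.Ico (0 : ℝ) (2 * π) | (inner ℝ u (n t) : ℝ) = 0}).Finite ∧
    ∀ t₀ ∈ {t ∈ Set.Ico (0 : ℝ) (2 * π) | (inner ℝ u (n t) : ℝ) = 0},
      deriv (fun t => (inner ℝ u (n t) : ℝ)) t₀
        = -τg t₀ * (inner ℝ u (cross3 (n t₀) (deriv Γ t₀)) : ℝ) ∧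
      deriv (fun t => (inner ℝ u (n t) : ℝ)) t₀ ≠ 0 := by
  set f : ℝ → ℝ := fun t => (inner ℝ u (n t) : ℝ) with hf
  -- derivative of f
  have hder : ∀ t, HasDerivAt f (-τg t * (inner ℝ u (cross3 (n t) (deriv Γ t)) : ℝ)) t := by
    intro t
    have hd : HasDerivAt n (deriv n t) t := ((hn.differentiable one_ne_zero) t).hasDerivAt
    have h1 : HasDerivAt f (inner ℝ u (deriv n t) : ℝ) t := by
      have := (hasDerivAt_const t u).inner ℝ hd
      simpa using this
    rw [hDarboux3 t, real_inner_smul_right] at h1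
    exact h1
  -- at a zero, ⟨u, n⊥⟩ ≠ 0
  have hkey : ∀ t, f t = 0 → (inner ℝ u (cross3 (n t) (deriv Γ t)) : ℝ) ≠ 0 := by
    intro t h0 hc
    apply huT t
    have hnn : (n t 0)^2 + (n t 1)^2 + (n t 2)^2 = 1 := by
      have := hn1 t
      have h2 : (inner ℝ (n t) (n t) : ℝ) = 1 := by
        rw [real_inner_self_eq_norm_sq, this]; norm_num
      rw [PiLp.inner_apply, Fin.sum_univ_three] at h2
      simpa [pow_two] using h2
    have hnt : n t 0 * deriv Γ t 0 + n t 1 * deriv Γ t 1 + n t 2 * deriv Γ t 2 = 0 := by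
      simpa [PiLp.inner_apply, Fin.sum_univ_three, mul_comm] using hnT t
    have hun : u 0 * n t 0 + u 1 * n t 1 + u 2 * n t 2 = 0 := by
      simpa [hf, PiLp.inner_apply, Fin.sum_univ_three, mul_comm] using h0
    have huc : u 0 * (n t 1 * deriv Γ t 2 - n t 2 * deriv Γ t 1)
        + u 1 * (n t 2 * deriv Γ t 0 - n t 0 * deriv Γ t 2)
        + u 2 * (n t 0 * deriv Γ t 1 - n t 1 * deriv Γ t 0) = 0 := by
      have := hc
      simpa [cross3, cross_apply, PiLp.inner_apply, Fin.sum_univ_three, mul_comm,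
        EuclideanSpace.equiv] using this
    obtain ⟨e1, e2, e3⟩ := key_scalar (n t 0) (n t 1) (n t 2)
      (deriv Γ t 0) (deriv Γ t 1) (deriv Γ t 2) (u 0) (u 1) (u 2) hnn hnt hun huc
    ext i
    fin_cases i <;>
      simpa [cross3, cross_apply, EuclideanSpace.equiv] using (by first | exact e1 | exact e2 | exact e3 : _)
  have hder0 : ∀ t, f t = 0 → deriv f t ≠ 0 := by
    intro t h0
    rw [(hder t).deriv]
    exact mul_ne_zero (neg_ne_zero.mpr (hτ t)) (hkey t h0)
  have hcont : Continuous f := by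
    have : Continuous n := hn.continuous
    exact (continuous_const.inner this)
  constructor
  · -- finiteness
    by_contra hfin
    have hinf : ({t ∈ Set.Ico (0 : ℝ) (2 * π) | f t = 0}).Infinite := hfin
    set Z := {t ∈ Set.Ico (0 : ℝ) (2 * π) | f t = 0} with hZ
    let x : ℕ → ℝ := fun k => (hinf.natEmbedding _ k : ℝ)
    have hxZ : ∀ k, x k ∈ Z := fun k => (hinf.natEmbedding _ k).2
    have hxinj : Function.Injective x :=
      Subtype.coe_injective.comp (hinf.natEmbedding _).injective
    have hxIcc : ∀ k, x k ∈ Set.Icc (0 : ℝ) (2 * π) := fun k =>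
      Set.Ico_subset_Icc_self (hxZ k).1
    obtain ⟨a, ha, φ, hφ, hlim⟩ := (isCompact_Icc).tendsto_subseq hxIcc
    have hfa : f a = 0 := by
      have h1 : Filter.Tendsto (fun k => f (x (φ k))) Filter.atTop (nhds (f a)) :=
        (hcont.continuousAt.tendsto).comp hlim
      have h2 : (fun k => f (x (φ k))) = fun _ => (0 : ℝ) :=
        funext fun k => (hxZ (φ k)).2
      rw [h2] at h1
      exact tendsto_nhds_unique h1 tendsto_const_nhds
    have hslope := hasDerivAt_iff_tendsto_slope.mp (hder a)
    have hdne : -τg a * (inner ℝ u (cross3 (n a) (deriv Γ a)) : ℝ) ≠ 0 :=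
      mul_ne_zero (neg_ne_zero.mpr (hτ a)) (hkey a hfa)
    have hne := hslope.eventually_ne hdne
    have hev : ∀ᶠ t in nhdsWithin a {a}ᶜ, f t ≠ 0 := by
      filter_upwards [hne, self_mem_nhdsWithin] with t h1 h2 h0
      apply h1
      simp [slope, hfa, h0]
    have hevne : ∀ᶠ k in Filter.atTop, x (φ k) ≠ a := by
      rcases em (∃ k0, x (φ k0) = a) with ⟨k0, hk0⟩ | h
      · refine Filter.eventually_atTop.mpr ⟨k0 + 1, fun k hk hk' => ?_⟩
        have : k = k0 := hφ.injective (hxinj (hk'.trans hk0.symm))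
        omega
      · exact Filter.Eventually.of_forall fun k hk => h ⟨k, hk⟩
    have hlim' : Filter.Tendsto (fun k => x (φ k)) Filter.atTop (nhdsWithin a {a}ᶜ) :=
      tendsto_nhdsWithin_of_tendsto_nhds_of_eventually_within _ hlim hevne
    obtain ⟨k, hk⟩ := (hlim'.eventually hev).exists
    exact hk ((hxZ (φ k)).2)
  · intro t₀ ht₀
    exact ⟨(hder t₀).deriv, hder0 t₀ ht₀.2⟩
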